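/- Gauss's identity: Let n be a nonnegative integer and let q be a complex number such that q^j ≠ 1 for every integer j with 1 ≤ j ≤ n. Then ∑_{k=0}^n (−1)^k / ((q;q)_k · (q;q)_{n−k}) equals 0 if n is odd, and equals 1 / ((1 − q^2)(1 − q^4) ⋯ (1 − q^n)) if n is even. -/

import Mathlib

/-- The finite q-Pochhammer symbol `(a; q)_k = ∏_{i=0}^{k-1} (1 - a q^i)`. -/
noncomputable def qPoch (q a : ℂ) (k : ℕ) : ℂ := ∏ i ∈ Finset.range k, (1 - a * q ^ i)

namespace GaussAux

def Hq (q : ℂ) (n : ℕ) : Prop := ∀ j : ℕ, 1 ≤ j → j ≤ n → q ^ j ≠ 1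

lemma Hq_mono {q : ℂ} {n m : ℕ} (h : Hq q n) (hm : m ≤ n) : Hq q m :=
  fun j h1 h2 => h j h1 (le_trans h2 hm)

lemma poch_succ (q : ℂ) (m : ℕ) : qPoch q q (m+1) = qPoch q q m * (1 - q^(m+1)) := by
  rw [qPoch, Finset.prod_range_succ, ← qPoch]
  ring

lemma poch_ne {q : ℂ} {n m : ℕ} (hq : Hq q n) (hm : m ≤ n) : qPoch q q m ≠ 0 := by
  rw [qPoch, Finset.prod_ne_zero_iff]
  intro i hi
  simp only [Finset.mem_range] at hi
  have h1 : q ^ (i+1) ≠ 1 := hq (i+1) (by omega) (by omega)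
  intro h
  apply h1
  rw [pow_succ']
  linear_combination -h

lemma one_sub_ne {q : ℂ} {n j : ℕ} (hq : Hq q n) (h1 : 1 ≤ j) (h2 : j ≤ n) :
    (1 - q ^ j) ≠ 0 := by
  intro h; exact hq j h1 h2 (by linear_combination -h)

noncomputable def u (q : ℂ) (n k : ℕ) : ℂ := 1 / (qPoch q q k * qPoch q q (n - k))

lemma u_symm (q : ℂ) {n k : ℕ} (hk : k ≤ n) : u q n (n - k) = u q n k := by
  unfold u
  rw [Nat.sub_sub_self hk, mul_comm]

lemma u_zero_self (q : ℂ) (n : ℕ) : u q n n = u q n 0 := by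
  simp [u, mul_comm]

lemma qPoch_zero (q : ℂ) : qPoch q q 0 = 1 := by simp [qPoch]

lemma cancel_aux (a b : ℂ) (hb : b ≠ 0) : b * (1 / (a * b)) = 1 / a := by
  rcases eq_or_ne a 0 with h|h
  · simp [h]
  · field_simp
    try ring

lemma bdry {q : ℂ} {n : ℕ} (hq : Hq q (n+1)) :
    (1 - q^(n+1)) * u q (n+1) (n+1) = u q n n := by
  unfold u
  simp only [Nat.sub_self, qPoch_zero, mul_one]
  rw [poch_succ]
  exact cancel_aux _ _ (one_sub_ne hq (by omega) (le_refl (n+1)))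

lemma bdry0 {q : ℂ} {n : ℕ} (hq : Hq q (n+1)) :
    (1 - q^(n+1)) * u q (n+1) 0 = u q n 0 := by
  unfold u
  simp only [Nat.sub_zero, qPoch_zero, one_mul]
  rw [poch_succ]
  exact cancel_aux _ _ (one_sub_ne hq (by omega) (le_refl (n+1)))

lemma pascalI {q : ℂ} {n k : ℕ} (hq : Hq q (n+1)) (hk : k < n) :
    (1 - q^(n+1)) * u q (n+1) (k+1) = q^(k+1) * u q n (k+1) + u q n k := by
  unfold u
  have e1 : n + 1 - (k+1) = n - k := by omega
  have e2 : n - (k+1) = n - k - 1 := by omega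
  have e3 : n - k = (n - k - 1) + 1 := by omega
  rw [e1, e2]
  rw [e3, poch_succ, poch_succ]
  have e4 : n - k - 1 + 1 = n - k := by omega
  rw [e4]
  have hP1 : qPoch q q k ≠ 0 := poch_ne hq (by omega)
  have hP2 : qPoch q q (n - k - 1) ≠ 0 := poch_ne hq (by omega)
  have hk1 : (1 - q^(k+1)) ≠ 0 := one_sub_ne hq (by omega) (by omega)
  have hnk : (1 - q^(n-k)) ≠ 0 := one_sub_ne hq (by omega) (by omega)
  have hpow : q^(k+1) * q^(n-k) = q^(n+1) := by
    rw [← pow_add]; congr 1; omega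
  rw [← hpow]
  field_simp
  ring

lemma pascalII {q : ℂ} {n k : ℕ} (hq : Hq q (n+1)) (hk : k < n) :
    (1 - q^(n+1)) * u q (n+1) (k+1) = u q n (k+1) + q^(n-k) * u q n k := by
  have e1 : k + 1 = (n+1) - (n - k) := by omega
  have e2 : n - k = (n - k - 1) + 1 := by omega
  conv_lhs => rw [e1, u_symm q (by omega), e2]
  rw [pascalI hq (by omega)]
  rw [show n - k - 1 + 1 = n - k from by omega]
  have h6 : u q n (n - k) = u q n k := u_symm q (by omega)
  have h7 : u q n (n - k - 1) = u q n (k+1) := by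
    rw [show n - k - 1 = n - (k+1) from by omega]; exact u_symm q (by omega)
  rw [h6, h7]
  ring

noncomputable def Ts (q : ℂ) (n : ℕ) : ℂ := ∑ k ∈ Finset.range (n+1), (-1)^k * u q n k
noncomputable def As (q : ℂ) (n : ℕ) : ℂ := ∑ k ∈ Finset.range (n+1), (-1)^k * q^k * u q n k

lemma Ts_peel_top (q : ℂ) (n : ℕ) :
    Ts q n = (∑ i ∈ Finset.range n, (-1)^i * u q n i) + (-1)^n * u q n n := by
  rw [Ts, Finset.sum_range_succ]

lemma Ts_peel_bot (q : ℂ) (n : ℕ) :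
    Ts q n = -(∑ i ∈ Finset.range n, (-1)^i * u q n (i+1)) + u q n 0 := by
  rw [Ts, Finset.sum_range_succ', ← Finset.sum_neg_distrib]
  simp only [pow_succ, pow_zero, one_mul]
  congr 1
  · exact Finset.sum_congr rfl (fun i _ => by ring)

lemma As_peel_bot (q : ℂ) (n : ℕ) :
    As q n = -(∑ i ∈ Finset.range n, (-1)^i * q^(i+1) * u q n (i+1)) + u q n 0 := by
  rw [As, Finset.sum_range_succ', ← Finset.sum_neg_distrib]
  simp only [pow_zero, one_mul]
  congr 1
  exact Finset.sum_congr rfl (fun i _ => by ring)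

lemma eqI {q : ℂ} {n : ℕ} (hq : Hq q (n+1)) :
    (1 - q^(n+1)) * Ts q (n+1) = As q n - Ts q n := by
  rw [Ts, Finset.mul_sum, Finset.sum_range_succ', Finset.sum_range_succ]
  have key : ∀ i ∈ Finset.range n,
      (1 - q^(n+1)) * ((-1)^(i+1) * u q (n+1) (i+1)) =
      -((-1)^i * q^(i+1) * u q n (i+1)) + -((-1)^i * u q n i) := by
    intro i hi
    simp only [Finset.mem_range] at hi
    linear_combination ((-1:ℂ))^(i+1) * pascalI hq hi
  rw [Finset.sum_congr rfl key, Finset.sum_add_distrib]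
  have hb1 : (1 - q^(n+1)) * ((-1)^(n+1) * u q (n+1) (n+1)) = (-1)^(n+1) * u q n n := by
    linear_combination ((-1:ℂ))^(n+1) * bdry hq
  have hb0 : (1 - q^(n+1)) * ((-1)^0 * u q (n+1) 0) = u q n 0 := by
    linear_combination bdry0 hq
  rw [hb1, hb0]
  rw [As_peel_bot, Ts_peel_top]
  simp only [Finset.sum_neg_distrib]
  ring

lemma eqII {q : ℂ} {n : ℕ} (hq : Hq q (n+1)) :
    (1 - q^(n+1)) * Ts q (n+1) = Ts q n - (-1)^n * As q n := by
  rw [Ts, Finset.mul_sum, Finset.sum_range_succ', Finset.sum_range_succ]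
  have key : ∀ i ∈ Finset.range n,
      (1 - q^(n+1)) * ((-1)^(i+1) * u q (n+1) (i+1)) =
      -((-1)^i * u q n (i+1)) + -((-1)^i * q^(n-i) * u q n i) := by
    intro i hi
    simp only [Finset.mem_range] at hi
    linear_combination ((-1:ℂ))^(i+1) * pascalII hq hi
  rw [Finset.sum_congr rfl key, Finset.sum_add_distrib]
  have hb1 : (1 - q^(n+1)) * ((-1)^(n+1) * u q (n+1) (n+1)) = (-1)^(n+1) * u q n n := by
    linear_combination ((-1:ℂ))^(n+1) * bdry hq
  have hb0 : (1 - q^(n+1)) * ((-1)^0 * u q (n+1) 0) = u q n 0 := by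
    linear_combination bdry0 hq
  rw [hb1, hb0]
  have hrefl : (∑ i ∈ Finset.range n, -((-1:ℂ)^i * q^(n-i) * u q n i)) =
      (-1)^n * (∑ j ∈ Finset.range n, (-1)^j * q^(j+1) * u q n (j+1)) := by
    rw [← Finset.sum_range_reflect (fun i => -((-1:ℂ)^i * q^(n-i) * u q n i)) n,
        Finset.mul_sum]
    refine Finset.sum_congr rfl (fun j hj => ?_)
    simp only [Finset.mem_range] at hj
    have e1 : n - (n - 1 - j) = j + 1 := by omega
    rw [e1]
    have e2 : u q n (n - 1 - j) = u q n (j+1) := by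
      rw [show n - 1 - j = n - (j+1) from by omega]
      exact u_symm q (by omega)
    rw [e2]
    have e3 : ((-1:ℂ))^(n-1-j) * (-1)^(j+1) = (-1)^n := by
      rw [← pow_add]; congr 1; omega
    have e4 : ((-1:ℂ))^j * (-1)^j = 1 := by
      rw [← pow_add, ← two_mul, pow_mul]; norm_num
    linear_combination ((-1:ℂ))^j * (q^(j+1) * u q n (j+1)) * e3 +
      ((-1:ℂ))^(n-1-j) * (q^(j+1) * u q n (j+1)) * e4
  rw [hrefl, Ts_peel_bot q n, As_peel_bot q n]
  simp only [Finset.sum_neg_distrib]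
  rw [u_zero_self q n]
  ring

lemma eqIII {q : ℂ} {m : ℕ} (hq : Hq q (m+1)) :
    (1 - q^(m+1)) * As q (m+1) = As q m - q^(m+1) * Ts q m := by
  rw [As, Finset.mul_sum, Finset.sum_range_succ', Finset.sum_range_succ]
  have key : ∀ i ∈ Finset.range m,
      (1 - q^(m+1)) * ((-1)^(i+1) * q^(i+1) * u q (m+1) (i+1)) =
      -((-1)^i * q^(i+1) * u q m (i+1)) + -((-1)^i * q^(m+1) * u q m i) := by
    intro i hi
    simp only [Finset.mem_range] at hi
    have hp : q^(i+1) * q^(m-i) = q^(m+1) := by rw [← pow_add]; congr 1; omega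
    have h := pascalII hq hi
    calc (1 - q^(m+1)) * ((-1)^(i+1) * q^(i+1) * u q (m+1) (i+1))
        = ((-1:ℂ))^(i+1) * q^(i+1) * ((1 - q^(m+1)) * u q (m+1) (i+1)) := by ring
      _ = ((-1:ℂ))^(i+1) * q^(i+1) * (u q m (i+1) + q^(m-i) * u q m i) := by rw [h]
      _ = -((-1)^i * q^(i+1) * u q m (i+1)) + ((-1:ℂ))^(i+1) * (q^(i+1) * q^(m-i)) * u q m i := by
          ring
      _ = -((-1)^i * q^(i+1) * u q m (i+1)) + -((-1)^i * q^(m+1) * u q m i) := by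
          rw [hp]; ring
  rw [Finset.sum_congr rfl key, Finset.sum_add_distrib]
  have hb1 : (1 - q^(m+1)) * ((-1)^(m+1) * q^(m+1) * u q (m+1) (m+1)) =
      (-1)^(m+1) * q^(m+1) * u q m m := by
    linear_combination ((-1:ℂ))^(m+1) * q^(m+1) * bdry hq
  have hb0 : (1 - q^(m+1)) * ((-1)^0 * q^0 * u q (m+1) 0) = u q m 0 := by
    simpa using bdry0 hq
  rw [hb1, hb0]
  rw [As_peel_bot q m, Ts_peel_top q m]
  simp only [Finset.sum_neg_distrib]
  have h5 : ∀ i ∈ Finset.range m, (-1:ℂ)^i * q^(m+1) * u q m i = q^(m+1) * ((-1)^i * u q m i) := by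
    intro i _; ring
  rw [Finset.sum_congr rfl h5, ← Finset.mul_sum]
  ring

lemma neg_one_pow_even {n : ℕ} (hn : Even n) : ((-1:ℂ))^n = 1 := Even.neg_one_pow hn

lemma Ts_odd_succ {q : ℂ} {n : ℕ} (hn : Even n) (hq : Hq q (n+1)) : Ts q (n+1) = 0 := by
  have h1 := eqI hq
  have h2 := eqII hq
  have hne := one_sub_ne hq (by omega) (le_refl (n+1))
  have hpow := neg_one_pow_even hn
  rw [hpow] at h2
  have hz : (1 - q^(n+1)) * Ts q (n+1) = 0 := by linear_combination (h1 + h2) / 2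
  exact (mul_eq_zero.mp hz).resolve_left hne

lemma As_even {q : ℂ} {n : ℕ} (hn : Even n) (hq : Hq q (n+1)) : As q n = Ts q n := by
  have h1 := eqI hq
  have h2 := eqII hq
  have hpow := neg_one_pow_even hn
  rw [hpow] at h2
  linear_combination (h2 - h1) / 2

lemma As_odd_succ {q : ℂ} {n : ℕ} (hn : Even n) (hq : Hq q (n+1)) :
    As q (n+1) = Ts q n := by
  have h3 := eqIII hq
  rw [As_even hn (Hq_mono hq (by omega))] at h3
  have hne := one_sub_ne hq (by omega) (le_refl (n+1))
  have : (1 - q^(n+1)) * As q (n+1) = (1 - q^(n+1)) * Ts q n := by linear_combination h3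
  exact mul_left_cancel₀ hne this

lemma Ts_step {q : ℂ} {n : ℕ} (hn : Even n) (hq : Hq q (n+2)) :
    (1 - q^(n+2)) * Ts q (n+2) = Ts q n := by
  have h1 := eqI (n := n+1) hq
  rw [Ts_odd_succ hn (Hq_mono hq (by omega)),
      As_odd_succ hn (Hq_mono hq (by omega))] at h1
  linear_combination h1

lemma Ts_zero (q : ℂ) : Ts q 0 = 1 := by
  simp [Ts, u, qPoch]

lemma Ts_even (m : ℕ) (q : ℂ) (hq : Hq q (2*m)) :
    Ts q (2*m) = 1 / ∏ i ∈ Finset.range m, (1 - q ^ (2 * (i + 1))) := by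
  induction m with
  | zero => simp [Ts_zero]
  | succ m ih =>
    have hq' : Hq q (2*m) := Hq_mono hq (by omega)
    have hstep : (1 - q^(2*m+2)) * Ts q (2*m+2) = Ts q (2*m) := by
      exact Ts_step (even_two_mul m) (by rw [show 2*m+2 = 2*(m+1) from by ring] at *; exact hq)
    have hne : (1 - q^(2*m+2)) ≠ 0 := by
      refine one_sub_ne hq (by omega) (by omega)
    rw [ih hq'] at hstep
    rw [show 2*(m+1) = 2*m+2 from by ring]
    rw [Finset.prod_range_succ]
    rw [show 2*(m+1) = 2*m+2 from by ring]
    have hprod : (∏ i ∈ Finset.range m, (1 - q ^ (2 * (i + 1)))) ≠ 0 := by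
      rw [Finset.prod_ne_zero_iff]
      intro i hi
      simp only [Finset.mem_range] at hi
      exact one_sub_ne hq (by omega) (by omega)
    field_simp at hstep ⊢
    linear_combination hstep

end GaussAux

/-- Gauss's identity. -/
theorem gauss_identity (n : ℕ) (q : ℂ) (hq : ∀ j : ℕ, 1 ≤ j → j ≤ n → q ^ j ≠ 1) :
    ∑ k ∈ Finset.range (n + 1), (-1 : ℂ) ^ k / (qPoch q q k * qPoch q q (n - k)) =
      if Odd n then 0
      else 1 / ∏ i ∈ Finset.range (n / 2), (1 - q ^ (2 * (i + 1))) := by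
  have hsum : ∑ k ∈ Finset.range (n + 1), (-1 : ℂ) ^ k / (qPoch q q k * qPoch q q (n - k)) =
      GaussAux.Ts q n := by
    rw [GaussAux.Ts]
    exact Finset.sum_congr rfl (fun k _ => by rw [GaussAux.u]; ring)
  rw [hsum]
  rcases Nat.even_or_odd n with he | ho
  · rw [if_neg (by simpa using he)]
    obtain ⟨m, hm⟩ := he
    have h2 : n = 2*m := by omega
    subst h2
    rw [Nat.mul_div_cancel_left m (by norm_num)]
    exact GaussAux.Ts_even m q hq
  · rw [if_pos ho]
    obtain ⟨m, hm⟩ := ho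
    subst hm
    exact GaussAux.Ts_odd_succ (even_two_mul m) hq
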